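/- Let p be an odd prime and χ the quadratic character of F_p. Then the sum S_4 = Σ χ(ab+1)χ(ac+1)χ(bc+1), taken over all triples (a,b,c) of distinct nonzero elements of F_p, equals 6p - 18. -/

import Mathlib

open Finset

section helpers

variable {F : Type*} [Field F] [Fintype F] [DecidableEq F]

private lemma sum_remove1 (g : F → ℤ) (a : F) :
    ∑ x : F, (if x = a then 0 else g x) = (∑ x : F, g x) - g a := by
  have key : ∀ x : F, (if x = a then 0 else g x)
      = g x - (if x = a then g x else 0) := by
    intro x; split_ifs with h
    · subst h; ring
    · ring
  rw [Finset.sum_congr rfl fun x _ => key x, Finset.sum_sub_distrib]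
  simp

private lemma sum_remove2 (g : F → ℤ) (a b : F) (hab : a ≠ b) :
    ∑ x : F, (if x = a ∨ x = b then 0 else g x)
      = (∑ x : F, g x) - g a - g b := by
  have key : ∀ x : F, (if x = a ∨ x = b then 0 else g x)
      = g x - (if x = a then g x else 0) - (if x = b then g x else 0) := by
    intro x
    by_cases h1 : x = a
    · subst h1; simp [hab]
    · by_cases h2 : x = b
      · subst h2; simp [h1]
      · simp [h1, h2]
  rw [Finset.sum_congr rfl fun x _ => key x, Finset.sum_sub_distrib,
    Finset.sum_sub_distrib]
  simp

private lemma sum_remove3 (g : F → ℤ) (a b c : F) (hab : a ≠ b) (hac : a ≠ c)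
    (hbc : b ≠ c) :
    ∑ x : F, (if x = a ∨ x = b ∨ x = c then 0 else g x)
      = (∑ x : F, g x) - g a - g b - g c := by
  have key : ∀ x : F, (if x = a ∨ x = b ∨ x = c then 0 else g x)
      = g x - (if x = a then g x else 0) - (if x = b then g x else 0)
        - (if x = c then g x else 0) := by
    intro x
    by_cases h1 : x = a
    · subst h1; simp [hab, hac]
    · by_cases h2 : x = b
      · subst h2; simp [h1, hbc]
      · by_cases h3 : x = c
        · subst h3; simp [h1, h2]
        · simp [h1, h2, h3]
  rw [Finset.sum_congr rfl fun x _ => key x, Finset.sum_sub_distrib,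
    Finset.sum_sub_distrib, Finset.sum_sub_distrib]
  simp

private lemma affine_reindex (a b : F) (ha : a ≠ 0) (f : F → ℤ) :
    ∑ x : F, f (a * x + b) = ∑ x : F, f x := by
  apply Fintype.sum_equiv ((Equiv.mulLeft₀ a ha).trans (Equiv.addRight b))
  intro x
  simp [Equiv.mulLeft₀]

private lemma sum_chi_shift (hF : ringChar F ≠ 2) {d : F} (hd : d ≠ 0) :
    ∑ x : F, quadraticChar F x * quadraticChar F (x + d) = -1 := by
  have step1 : ∀ x : F, quadraticChar F x * quadraticChar F (x + d)
      = if x = 0 then 0 else quadraticChar F (1 + d * x⁻¹) := by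
    intro x
    by_cases hx : x = 0
    · simp [hx]
    · rw [if_neg hx]
      have hxd : x + d = x * (1 + d * x⁻¹) := by field_simp
      rw [hxd, map_mul, ← mul_assoc, ← pow_two, quadraticChar_sq_one hx, one_mul]
  rw [Finset.sum_congr rfl fun x _ => step1 x]
  have step2 : ∑ x : F, (if x = 0 then 0 else quadraticChar F (1 + d * x⁻¹))
      = ∑ x : F, (if x = 0 then 0 else quadraticChar F (1 + d * x)) := by
    apply Fintype.sum_equiv (Equiv.inv F)
    intro x
    by_cases hx : x = 0
    · simp [hx]
    · simp [hx, inv_eq_zero]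
  rw [step2]
  have step3 : ∀ x : F, (if x = 0 then 0 else quadraticChar F (1 + d * x))
      = quadraticChar F (1 + d * x) - (if x = 0 then 1 else 0) := by
    intro x
    split_ifs with h
    · subst h; simp
    · ring
  rw [Finset.sum_congr rfl fun x _ => step3 x, Finset.sum_sub_distrib]
  have h0 : ∑ x : F, quadraticChar F (1 + d * x) = 0 := by
    rw [show (∑ x : F, quadraticChar F (1 + d * x))
        = ∑ x : F, quadraticChar F (d * x + 1) from
      Finset.sum_congr rfl fun x _ => by rw [add_comm],
      affine_reindex d 1 hd (fun t => quadraticChar F t),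
      quadraticChar_sum_zero hF]
  rw [h0]
  simp

private lemma sum_chi_two (hF : ringChar F ≠ 2) {a b : F} (ha : a ≠ 0)
    (hb : b ≠ 0) (hab : a ≠ b) :
    ∑ c : F, quadraticChar F (a * c + 1) * quadraticChar F (b * c + 1)
      = -quadraticChar F (a * b) := by
  have key : ∀ c : F, quadraticChar F (a * c + 1) * quadraticChar F (b * c + 1)
      = quadraticChar F (a * b)
        * (quadraticChar F (c + a⁻¹) * quadraticChar F (c + b⁻¹)) := by
    intro c
    have h1 : a * c + 1 = a * (c + a⁻¹) := by field_simp
    have h2 : b * c + 1 = b * (c + b⁻¹) := by field_simp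
    rw [h1, h2, map_mul, map_mul, map_mul]
    ring
  rw [Finset.sum_congr rfl fun c _ => key c, ← Finset.mul_sum]
  have shift : ∑ c : F, quadraticChar F (c + a⁻¹) * quadraticChar F (c + b⁻¹)
      = ∑ c : F, quadraticChar F c * quadraticChar F (c + (b⁻¹ - a⁻¹)) := by
    apply Fintype.sum_equiv (Equiv.addRight a⁻¹)
    intro c
    simp only [Equiv.coe_addRight]
    congr 2
    ring
  have hd : b⁻¹ - a⁻¹ ≠ 0 := by
    rw [sub_ne_zero]
    exact fun h => hab (by rw [← inv_inv a, ← inv_inv b, h])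
  rw [shift, sum_chi_shift hF hd, mul_neg_one]

private lemma sum_chi_sq_one (hF : ringChar F ≠ 2) :
    ∑ x : F, quadraticChar F (x ^ 2 + 1) = -1 := by
  have fib := Finset.sum_fiberwise' (univ : Finset F) (fun x => x ^ 2)
    (fun t => quadraticChar F (t + 1))
  rw [← fib]
  have inner : ∀ t : F, ∑ _x ∈ univ.filter (fun x : F => x ^ 2 = t),
      quadraticChar F (t + 1)
      = (quadraticChar F t + 1) * quadraticChar F (t + 1) := by
    intro t
    rw [Finset.sum_const, ← quadraticChar_card_sqrts hF t]
    have : ({x : F | x ^ 2 = t}).toFinset = univ.filter (fun x : F => x ^ 2 = t) := by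
      ext x; simp
    rw [this]
    simp [nsmul_eq_mul]
  rw [Finset.sum_congr rfl fun t _ => inner t]
  have expand : ∀ t : F, (quadraticChar F t + 1) * quadraticChar F (t + 1)
      = quadraticChar F t * quadraticChar F (t + 1) + quadraticChar F (t + 1) := by
    intro t; ring
  rw [Finset.sum_congr rfl fun t _ => expand t, Finset.sum_add_distrib,
    sum_chi_shift hF (one_ne_zero : (1 : F) ≠ 0)]
  have : ∑ t : F, quadraticChar F (t + 1) = 0 := by
    rw [show (∑ t : F, quadraticChar F (t + 1))
        = ∑ t : F, quadraticChar F (1 * t + 1) from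
      Finset.sum_congr rfl fun t _ => by rw [one_mul],
      affine_reindex 1 1 one_ne_zero (fun t => quadraticChar F t),
      quadraticChar_sum_zero hF]
  rw [this]
  norm_num

private lemma sum_chi_sq (hF : ringChar F ≠ 2) {a : F} (ha : a ≠ 0) :
    ∑ b : F, (quadraticChar F (a * b + 1)) ^ 2 = (Fintype.card F : ℤ) - 1 := by
  have key : ∀ b : F, (quadraticChar F (a * b + 1)) ^ 2
      = 1 - (if b = -a⁻¹ then 1 else 0) := by
    intro b
    by_cases h : b = -a⁻¹
    · subst h
      have : a * (-a⁻¹) + 1 = 0 := by field_simp; ring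
      rw [this, quadraticChar_zero, if_pos rfl]
      ring
    · have hz : a * b + 1 ≠ 0 := by
        intro hc
        apply h
        have h1 : a * b = -1 := by linear_combination hc
        calc b = a⁻¹ * (a * b) := by rw [← mul_assoc, inv_mul_cancel₀ ha, one_mul]
          _ = a⁻¹ * (-1) := by rw [h1]
          _ = -a⁻¹ := by ring
      rw [quadraticChar_sq_one hz, if_neg h]
      ring
  rw [Finset.sum_congr rfl fun b _ => key b, Finset.sum_sub_distrib]
  simp [Finset.card_univ]

private lemma sum_term4 (hF : ringChar F ≠ 2) {a : F} (ha : a ≠ 0) :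
    ∑ b : F, (quadraticChar F (a * b + 1)) ^ 2 * quadraticChar F (b ^ 2 + 1)
      = -1 - quadraticChar F (a ^ 2 + 1) := by
  have key : ∀ b : F, (quadraticChar F (a * b + 1)) ^ 2 * quadraticChar F (b ^ 2 + 1)
      = quadraticChar F (b ^ 2 + 1)
        - (if b = -a⁻¹ then quadraticChar F (b ^ 2 + 1) else 0) := by
    intro b
    by_cases h : b = -a⁻¹
    · have hz : a * b + 1 = 0 := by subst h; field_simp; ring
      rw [hz, quadraticChar_zero, if_pos h]
      ring
    · have hz : a * b + 1 ≠ 0 := by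
        intro hc
        apply h
        have h1 : a * b = -1 := by linear_combination hc
        calc b = a⁻¹ * (a * b) := by rw [← mul_assoc, inv_mul_cancel₀ ha, one_mul]
          _ = a⁻¹ * (-1) := by rw [h1]
          _ = -a⁻¹ := by ring
      rw [quadraticChar_sq_one hz, if_neg h]
      ring
  rw [Finset.sum_congr rfl fun b _ => key b, Finset.sum_sub_distrib,
    sum_chi_sq_one hF]
  have hpt : ∑ b : F, (if b = -a⁻¹ then quadraticChar F (b ^ 2 + 1) else 0)
      = quadraticChar F (a ^ 2 + 1) := by
    rw [Finset.sum_ite_eq' univ (-a⁻¹) (fun b => quadraticChar F (b ^ 2 + 1))]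
    rw [if_pos (mem_univ _)]
    have : (-a⁻¹ : F) ^ 2 + 1 = (a⁻¹) ^ 2 * (a ^ 2 + 1) := by field_simp; ring
    rw [this, map_mul, quadraticChar_sq_one' (inv_ne_zero ha), one_mul]
  rw [hpt]

private lemma step_c (hF : ringChar F ≠ 2) {a b : F} (ha : a ≠ 0) (hb : b ≠ 0)
    (hba : b ≠ a) :
    ∑ c : F, (if c = 0 ∨ c = a ∨ c = b then 0 else
        quadraticChar F (a * b + 1) * quadraticChar F (a * c + 1)
          * quadraticChar F (b * c + 1))
      = -(quadraticChar F (a * b + 1) * quadraticChar F (a * b))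
        - quadraticChar F (a * b + 1)
        - quadraticChar F (a * b + 1) ^ 2 * quadraticChar F (a ^ 2 + 1)
        - quadraticChar F (a * b + 1) ^ 2 * quadraticChar F (b ^ 2 + 1) := by
  rw [sum_remove3 (fun c => quadraticChar F (a * b + 1) * quadraticChar F (a * c + 1)
      * quadraticChar F (b * c + 1)) 0 a b (Ne.symm ha) (Ne.symm hb) (Ne.symm hba)]
  have hsum : ∑ c : F, quadraticChar F (a * b + 1) * quadraticChar F (a * c + 1)
      * quadraticChar F (b * c + 1)
      = -(quadraticChar F (a * b + 1) * quadraticChar F (a * b)) := by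
    rw [Finset.sum_congr rfl fun c _ => mul_assoc (quadraticChar F (a * b + 1))
      (quadraticChar F (a * c + 1)) (quadraticChar F (b * c + 1)),
      ← Finset.mul_sum, sum_chi_two hF ha hb (Ne.symm hba)]
    ring
  rw [hsum]
  have h0 : quadraticChar F (a * b + 1) * quadraticChar F (a * 0 + 1)
      * quadraticChar F (b * 0 + 1) = quadraticChar F (a * b + 1) := by
    simp
  have haa : quadraticChar F (a * b + 1) * quadraticChar F (a * a + 1)
      * quadraticChar F (b * a + 1)
      = quadraticChar F (a * b + 1) ^ 2 * quadraticChar F (a ^ 2 + 1) := by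
    rw [show a * a = a ^ 2 by ring, show b * a = a * b by ring]
    ring
  have hbb : quadraticChar F (a * b + 1) * quadraticChar F (a * b + 1)
      * quadraticChar F (b * b + 1)
      = quadraticChar F (a * b + 1) ^ 2 * quadraticChar F (b ^ 2 + 1) := by
    rw [show b * b = b ^ 2 by ring]
    ring
  rw [h0, haa, hbb]

private lemma step_b (hF : ringChar F ≠ 2) {a : F} (ha : a ≠ 0) :
    ∑ b : F, (if b = 0 ∨ b = a then 0 else
        (-(quadraticChar F (a * b + 1) * quadraticChar F (a * b))
          - quadraticChar F (a * b + 1)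
          - quadraticChar F (a * b + 1) ^ 2 * quadraticChar F (a ^ 2 + 1)
          - quadraticChar F (a * b + 1) ^ 2 * quadraticChar F (b ^ 2 + 1)))
      = 4 + (7 - (Fintype.card F : ℤ)) * quadraticChar F (a ^ 2 + 1) := by
  have hcube : ∀ x : F, quadraticChar F x ^ 3 = quadraticChar F x := by
    intro x
    by_cases hx : x = 0
    · simp [hx]
    · rcases quadraticChar_dichotomy hx with h | h <;> rw [h] <;> norm_num
  rw [sum_remove2 _ 0 a (Ne.symm ha)]
  have hS1 : ∑ b : F, quadraticChar F (a * b + 1) * quadraticChar F (a * b) = -1 := by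
    have h := affine_reindex a 0 ha
      (fun t => quadraticChar F (t + 1) * quadraticChar F t)
    simp only [add_zero] at h
    rw [h, Finset.sum_congr rfl fun t _ => mul_comm (quadraticChar F (t + 1))
      (quadraticChar F t), sum_chi_shift hF (one_ne_zero : (1 : F) ≠ 0)]
  have hS2 : ∑ b : F, quadraticChar F (a * b + 1) = 0 := by
    rw [affine_reindex a 1 ha (fun t => quadraticChar F t), quadraticChar_sum_zero hF]
  have hS3 : ∑ b : F, quadraticChar F (a * b + 1) ^ 2 * quadraticChar F (a ^ 2 + 1)
      = ((Fintype.card F : ℤ) - 1) * quadraticChar F (a ^ 2 + 1) := by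
    rw [← Finset.sum_mul, sum_chi_sq hF ha]
  have hS4 := sum_term4 hF ha
  have hsum : ∑ b : F, (-(quadraticChar F (a * b + 1) * quadraticChar F (a * b))
      - quadraticChar F (a * b + 1)
      - quadraticChar F (a * b + 1) ^ 2 * quadraticChar F (a ^ 2 + 1)
      - quadraticChar F (a * b + 1) ^ 2 * quadraticChar F (b ^ 2 + 1))
      = 2 + (2 - (Fintype.card F : ℤ)) * quadraticChar F (a ^ 2 + 1) := by
    rw [Finset.sum_sub_distrib, Finset.sum_sub_distrib, Finset.sum_sub_distrib,
      Finset.sum_neg_distrib, hS1, hS2, hS3, hS4]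
    ring
  rw [hsum]
  have hv0 : (-(quadraticChar F (a * 0 + 1) * quadraticChar F (a * 0))
      - quadraticChar F (a * 0 + 1)
      - quadraticChar F (a * 0 + 1) ^ 2 * quadraticChar F (a ^ 2 + 1)
      - quadraticChar F (a * 0 + 1) ^ 2 * quadraticChar F ((0 : F) ^ 2 + 1))
      = -2 - quadraticChar F (a ^ 2 + 1) := by
    simp
    ring
  have hva : (-(quadraticChar F (a * a + 1) * quadraticChar F (a * a))
      - quadraticChar F (a * a + 1)
      - quadraticChar F (a * a + 1) ^ 2 * quadraticChar F (a ^ 2 + 1)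
      - quadraticChar F (a * a + 1) ^ 2 * quadraticChar F (a ^ 2 + 1))
      = -4 * quadraticChar F (a ^ 2 + 1) := by
    rw [show a * a = a ^ 2 by ring, quadraticChar_sq_one' ha]
    have h3 := hcube (a ^ 2 + 1)
    nlinarith [h3]
  rw [hv0, hva]
  ring

private lemma step_a (hF : ringChar F ≠ 2) :
    ∑ a : F, (if a = 0 then 0 else
        (4 + (7 - (Fintype.card F : ℤ)) * quadraticChar F (a ^ 2 + 1)))
      = 6 * (Fintype.card F : ℤ) - 18 := by
  rw [sum_remove1 (fun a => 4 + (7 - (Fintype.card F : ℤ))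
    * quadraticChar F (a ^ 2 + 1)) 0]
  have h1 : ∑ a : F, (4 + (7 - (Fintype.card F : ℤ)) * quadraticChar F (a ^ 2 + 1))
      = 4 * (Fintype.card F : ℤ) + (7 - (Fintype.card F : ℤ))
        * ∑ a : F, quadraticChar F (a ^ 2 + 1) := by
    rw [Finset.sum_add_distrib, ← Finset.mul_sum, Finset.sum_const, Finset.card_univ]
    push_cast
    ring
  rw [h1, sum_chi_sq_one hF]
  have : ((0 : F) ^ 2 + 1) = 1 := by ring
  rw [this, map_one]
  ring

end helpers

theorem S4_sum (p : ℕ) [Fact p.Prime] (hodd : p % 2 = 1) :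
    (∑ a : ZMod p, ∑ b : ZMod p, ∑ c : ZMod p,
      if a ≠ 0 ∧ b ≠ 0 ∧ c ≠ 0 ∧ a ≠ b ∧ a ≠ c ∧ b ≠ c then
        quadraticChar (ZMod p) (a * b + 1) * quadraticChar (ZMod p) (a * c + 1) *
          quadraticChar (ZMod p) (b * c + 1)
      else 0) = 6 * (p : ℤ) - 18 := by
  have hF : ringChar (ZMod p) ≠ 2 := by
    rw [ZMod.ringChar_zmod_n]
    omega
  have trans1 : ∀ a b c : ZMod p,
      (if a ≠ 0 ∧ b ≠ 0 ∧ c ≠ 0 ∧ a ≠ b ∧ a ≠ c ∧ b ≠ c then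
        quadraticChar (ZMod p) (a * b + 1) * quadraticChar (ZMod p) (a * c + 1) *
          quadraticChar (ZMod p) (b * c + 1)
      else 0)
      = (if a = 0 then 0 else if b = 0 ∨ b = a then 0 else
          if c = 0 ∨ c = a ∨ c = b then 0 else
          quadraticChar (ZMod p) (a * b + 1) * quadraticChar (ZMod p) (a * c + 1) *
            quadraticChar (ZMod p) (b * c + 1)) := by
    intro a b c
    by_cases h : a ≠ 0 ∧ b ≠ 0 ∧ c ≠ 0 ∧ a ≠ b ∧ a ≠ c ∧ b ≠ c
    · obtain ⟨h1, h2, h3, h4, h5, h6⟩ := h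
      rw [if_pos ⟨h1, h2, h3, h4, h5, h6⟩, if_neg h1,
        if_neg (by rintro (rfl | rfl) <;> simp_all),
        if_neg (by rintro (rfl | rfl | rfl) <;> simp_all)]
    · rw [if_neg h]
      by_cases ha : a = 0
      · rw [if_pos ha]
      rw [if_neg ha]
      by_cases hb : b = 0 ∨ b = a
      · rw [if_pos hb]
      rw [if_neg hb]
      by_cases hc : c = 0 ∨ c = a ∨ c = b
      · rw [if_pos hc]
      exfalso
      push_neg at hb hc
      exact h ⟨ha, hb.1, hc.1, fun hh => hb.2 hh.symm, fun hh => hc.2.1 hh.symm,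
        fun hh => hc.2.2 hh.symm⟩
  rw [Finset.sum_congr rfl fun a _ => Finset.sum_congr rfl fun b _ =>
    Finset.sum_congr rfl fun c _ => trans1 a b c]
  have trans2 : ∀ a : ZMod p,
      (∑ b : ZMod p, ∑ c : ZMod p,
        (if a = 0 then 0 else if b = 0 ∨ b = a then 0 else
          if c = 0 ∨ c = a ∨ c = b then 0 else
          quadraticChar (ZMod p) (a * b + 1) * quadraticChar (ZMod p) (a * c + 1) *
            quadraticChar (ZMod p) (b * c + 1)))
      = (if a = 0 then 0 else
          (4 + (7 - (Fintype.card (ZMod p) : ℤ)) * quadraticChar (ZMod p) (a ^ 2 + 1))) := by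
    intro a
    by_cases ha : a = 0
    · simp [ha]
    simp only [if_neg ha]
    have trans3 : ∀ b : ZMod p,
        (∑ c : ZMod p, (if b = 0 ∨ b = a then 0 else
          if c = 0 ∨ c = a ∨ c = b then 0 else
          quadraticChar (ZMod p) (a * b + 1) * quadraticChar (ZMod p) (a * c + 1) *
            quadraticChar (ZMod p) (b * c + 1)))
        = (if b = 0 ∨ b = a then 0 else
            (-(quadraticChar (ZMod p) (a * b + 1) * quadraticChar (ZMod p) (a * b))
              - quadraticChar (ZMod p) (a * b + 1)
              - quadraticChar (ZMod p) (a * b + 1) ^ 2 * quadraticChar (ZMod p) (a ^ 2 + 1)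
              - quadraticChar (ZMod p) (a * b + 1) ^ 2 * quadraticChar (ZMod p) (b ^ 2 + 1))) := by
      intro b
      by_cases hb : b = 0 ∨ b = a
      · simp [hb]
      push_neg at hb
      simp only [if_neg (not_or.mpr ⟨hb.1, hb.2⟩)]
      exact step_c hF ha hb.1 hb.2
    rw [Finset.sum_congr rfl fun b _ => trans3 b]
    exact step_b hF ha
  rw [Finset.sum_congr rfl fun a _ => trans2 a, step_a hF, ZMod.card]
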